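/- arXiv:1911.07421 — 4 statements merged into one kernel-verified Lean document; each statement's English description precedes it below -/
import Mathlib

section
/- The optimal GAN discriminator between two densities is their normalized ratio: for all measurable D : Z → (0,1), ∫ p(z)·log D(z) dμ(z) + ∫ q(z)·log(1 − D(z)) dμ(z) ≤ ∫ p(z)·log D*(z) dμ(z) + ∫ q(z)·log(1 − D*(z)) dμ(z), where D*(z) = p(z)/(p(z)+q(z)). (This is the fact used to estimate the aggregate posterior: after training the latent discriminator D_z optimally against the prior p(z) and the encoder marginal q(z), one has D_z = p(z)/(p(z)+q(z)).) -/
open MeasureTheory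

lemma pointwise_gan (a b t : ℝ) (ha : 0 ≤ a) (hb : 0 ≤ b) (hab : 0 < a + b)
    (ht0 : 0 < t) (ht1 : t < 1) :
    a * Real.log t + b * Real.log (1 - t) ≤
      a * Real.log (a / (a + b)) + b * Real.log (b / (a + b)) := by
  have h1t : 0 < 1 - t := by linarith
  rcases eq_or_lt_of_le ha with h | ha'
  · have hb' : 0 < b := by linarith
    simp only [← h, zero_mul, zero_add, zero_div, div_self hb'.ne', Real.log_one, mul_zero]
    have hl : Real.log (1 - t) ≤ 0 := Real.log_nonpos (by linarith) (by linarith)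
    exact mul_nonpos_of_nonneg_of_nonpos hb hl
  rcases eq_or_lt_of_le hb with h | hb'
  · simp only [← h, zero_mul, add_zero, div_self ha'.ne', Real.log_one, mul_zero]
    have hl : Real.log t ≤ 0 := Real.log_nonpos (by linarith) (by linarith)
    exact mul_nonpos_of_nonneg_of_nonpos ha hl
  · have hA : Real.log (a / (a + b)) = Real.log a - Real.log (a + b) :=
      Real.log_div ha'.ne' hab.ne'
    have hB : Real.log (b / (a + b)) = Real.log b - Real.log (a + b) :=
      Real.log_div hb'.ne' hab.ne'
    have hC : Real.log (t * (a + b) / a) = Real.log t + Real.log (a + b) - Real.log a := by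
      rw [Real.log_div (by positivity) ha'.ne', Real.log_mul ht0.ne' hab.ne']
    have hD : Real.log ((1 - t) * (a + b) / b) =
        Real.log (1 - t) + Real.log (a + b) - Real.log b := by
      rw [Real.log_div (by positivity) hb'.ne', Real.log_mul h1t.ne' hab.ne']
    have e1 : Real.log (t * (a + b) / a) ≤ t * (a + b) / a - 1 :=
      Real.log_le_sub_one_of_pos (by positivity)
    have e2 : Real.log ((1 - t) * (a + b) / b) ≤ (1 - t) * (a + b) / b - 1 :=
      Real.log_le_sub_one_of_pos (div_pos (mul_pos h1t hab) hb')
    have k1 : a * Real.log (t * (a + b) / a) ≤ t * (a + b) - a := by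
      calc a * Real.log (t * (a + b) / a) ≤ a * (t * (a + b) / a - 1) :=
            mul_le_mul_of_nonneg_left e1 ha
        _ = t * (a + b) - a := by field_simp
    have k2 : b * Real.log ((1 - t) * (a + b) / b) ≤ (1 - t) * (a + b) - b := by
      calc b * Real.log ((1 - t) * (a + b) / b) ≤ b * ((1 - t) * (a + b) / b - 1) :=
            mul_le_mul_of_nonneg_left e2 hb
        _ = (1 - t) * (a + b) - b := by field_simp
    rw [hC] at k1; rw [hD] at k2
    rw [hA, hB]
    nlinarith

/-- **The optimal GAN discriminator between two densities is their normalized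
ratio**: for probability densities `p, q` w.r.t. `μ` with `p + q > 0` μ-a.e., and
every measurable discriminator `D : Z → (0,1)`,
`∫ p·log D dμ + ∫ q·log(1-D) dμ ≤ ∫ p·log D* dμ + ∫ q·log(1-D*) dμ`
where `D*(z) = p(z)/(p(z)+q(z))` (so `1 - D*(z) = q(z)/(p(z)+q(z))`). -/
theorem optimal_gan_discriminator
    {Z : Type*} [MeasurableSpace Z] (μ : Measure Z) [SigmaFinite μ]
    (p q : Z → ℝ) (hp_meas : Measurable p) (hq_meas : Measurable q)
    (hp_nonneg : ∀ z, 0 ≤ p z) (hq_nonneg : ∀ z, 0 ≤ q z)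
    (hp_prob : ∫ z, p z ∂μ = 1) (hq_prob : ∫ z, q z ∂μ = 1)
    (h_pos : ∀ᵐ z ∂μ, 0 < p z + q z)
    (D : Z → ℝ) (hD_meas : Measurable D)
    (hD_range : ∀ z, D z ∈ Set.Ioo (0 : ℝ) 1)
    (h_int_pD : Integrable (fun z => p z * Real.log (D z)) μ)
    (h_int_qD : Integrable (fun z => q z * Real.log (1 - D z)) μ)
    (h_int_pstar : Integrable (fun z => p z * Real.log (p z / (p z + q z))) μ)
    (h_int_qstar : Integrable (fun z => q z * Real.log (q z / (p z + q z))) μ) :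
    ∫ z, p z * Real.log (D z) ∂μ + ∫ z, q z * Real.log (1 - D z) ∂μ ≤
      ∫ z, p z * Real.log (p z / (p z + q z)) ∂μ +
        ∫ z, q z * Real.log (q z / (p z + q z)) ∂μ := by
  rw [← integral_add h_int_pD h_int_qD, ← integral_add h_int_pstar h_int_qstar]
  refine integral_mono_ae (h_int_pD.add h_int_qD) (h_int_pstar.add h_int_qstar) ?_
  filter_upwards [h_pos] with z hz
  exact pointwise_gan (p z) (q z) (D z) (hp_nonneg z) (hq_nonneg z) hz
    (hD_range z).1 (hD_range z).2
end

section
/- The value of the GAN objective at the optimal discriminator D*(z) = p(z)/(p(z)+q(z)) equals ∫ p(z)·log D*(z) dμ(z) + ∫ q(z)·log(1 − D*(z)) dμ(z) = KL(P ‖ M) + KL(Q ‖ M) − log 4, where P = p·μ, Q = q·μ, and M = ½(P + Q) is the mixture. (Equivalently, the supremum of the discriminator objective equals 2·JSD(P,Q) − log 4.) -/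
open MeasureTheory
open scoped ENNReal NNReal

/-- Kullback–Leibler divergence between two measures, as the expected
log-likelihood ratio (meaningful under absolute continuity and integrability;
here each measure is absolutely continuous w.r.t. the mixture `M`). -/
noncomputable def klDiv {α : Type*} [MeasurableSpace α] (ν ρ : Measure α) : ℝ :=
  ∫ x, llr ν ρ x ∂ν

/-- **Value of the GAN objective at the optimal discriminator**
`D*(z) = p(z)/(p(z)+q(z))`:
`∫ p·log D* dμ + ∫ q·log(1-D*) dμ = KL(P‖M) + KL(Q‖M) - log 4`,
where `P = p·μ`, `Q = q·μ` and `M = ½(P+Q)` (equivalently, the supremum of the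
discriminator objective equals `2·JSD(P,Q) - log 4`). -/
theorem gan_value_at_optimal_discriminator
    {Z : Type*} [MeasurableSpace Z] (μ : Measure Z) [SigmaFinite μ]
    (p q : Z → ℝ) (hp_meas : Measurable p) (hq_meas : Measurable q)
    (hp_nonneg : ∀ z, 0 ≤ p z) (hq_nonneg : ∀ z, 0 ≤ q z)
    (hp_prob : ∫ z, p z ∂μ = 1) (hq_prob : ∫ z, q z ∂μ = 1)
    (h_pos : ∀ᵐ z ∂μ, 0 < p z + q z)
    (h_int_pstar : Integrable (fun z => p z * Real.log (p z / (p z + q z))) μ)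
    (h_int_qstar : Integrable (fun z => q z * Real.log (q z / (p z + q z))) μ) :
    ∫ z, p z * Real.log (p z / (p z + q z)) ∂μ +
        ∫ z, q z * Real.log (q z / (p z + q z)) ∂μ =
      klDiv (μ.withDensity fun z => ENNReal.ofReal (p z))
          ((2 : ENNReal)⁻¹ • (μ.withDensity (fun z => ENNReal.ofReal (p z)) +
            μ.withDensity (fun z => ENNReal.ofReal (q z)))) +
        klDiv (μ.withDensity fun z => ENNReal.ofReal (q z))
          ((2 : ENNReal)⁻¹ • (μ.withDensity (fun z => ENNReal.ofReal (p z)) +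
            μ.withDensity (fun z => ENNReal.ofReal (q z)))) -
        Real.log 4 := by
  set f : Z → ℝ≥0∞ := fun z => ENNReal.ofReal (p z) with hf_def
  set g : Z → ℝ≥0∞ := fun z => ENNReal.ofReal (q z) with hg_def
  set m : Z → ℝ≥0∞ := fun z => 2⁻¹ * (f z + g z) with hm_def
  have hf_meas : Measurable f := hp_meas.ennreal_ofReal
  have hg_meas : Measurable g := hq_meas.ennreal_ofReal
  have hm_meas : Measurable m := (hf_meas.add hg_meas).const_mul _
  have hM : (2 : ENNReal)⁻¹ • (μ.withDensity f + μ.withDensity g) = μ.withDensity m := by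
    rw [← withDensity_add_left hf_meas, ← withDensity_smul' 2⁻¹ (f + g) (by simp)]
    rfl
  have hm_ne_top : ∀ᵐ z ∂μ, m z ≠ ∞ := ae_of_all _ fun z => by
    simp [hm_def, hf_def, hg_def, ENNReal.mul_ne_top, ENNReal.ofReal_ne_top]
  have hm_ne_zero : ∀ᵐ z ∂μ, m z ≠ 0 := by
    filter_upwards [h_pos] with z hz
    have : 0 < p z ∨ 0 < q z := by
      rcases lt_or_eq_of_le (hp_nonneg z) with h | h
      · exact Or.inl h
      · right; linarith
    simp only [hm_def, hf_def, hg_def, mul_ne_zero_iff, ne_eq, ENNReal.inv_eq_zero,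
      ENNReal.ofNat_ne_top, not_false_eq_true, true_and, add_eq_zero, ENNReal.ofReal_eq_zero,
      not_and_or, not_le]
    tauto
  haveI : SigmaFinite (μ.withDensity f) :=
    SigmaFinite.withDensity_of_ne_top (ae_of_all _ fun z => ENNReal.ofReal_ne_top)
  haveI : SigmaFinite (μ.withDensity g) :=
    SigmaFinite.withDensity_of_ne_top (ae_of_all _ fun z => ENNReal.ofReal_ne_top)
  -- rnDeriv computations
  have hPd : (μ.withDensity f).rnDeriv (μ.withDensity m) =ᵐ[μ] fun z => (m z)⁻¹ * f z := by
    have h1 := Measure.rnDeriv_withDensity_right (μ.withDensity f) μ hm_meas.aemeasurable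
      hm_ne_zero hm_ne_top
    have h2 := Measure.rnDeriv_withDensity μ hf_meas
    filter_upwards [h1, h2] with z h1 h2
    rw [h1, h2]
  have hQd : (μ.withDensity g).rnDeriv (μ.withDensity m) =ᵐ[μ] fun z => (m z)⁻¹ * g z := by
    have h1 := Measure.rnDeriv_withDensity_right (μ.withDensity g) μ hm_meas.aemeasurable
      hm_ne_zero hm_ne_top
    have h2 := Measure.rnDeriv_withDensity μ hg_meas
    filter_upwards [h1, h2] with z h1 h2
    rw [h1, h2]
  have hint_p : Integrable p μ := by
    by_contra h
    rw [integral_undef h] at hp_prob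
    norm_num at hp_prob
  have hint_q : Integrable q μ := by
    by_contra h
    rw [integral_undef h] at hq_prob
    norm_num at hq_prob
  -- main computation for one side
  have key : ∀ (r s : Z → ℝ), Measurable r → (∀ z, 0 ≤ r z) → (∀ z, 0 ≤ s z) →
      (∫ z, r z ∂μ = 1) → Integrable r μ →
      Integrable (fun z => r z * Real.log (r z / (r z + s z))) μ →
      (∀ᵐ z ∂μ, 0 < r z + s z) →
      (∀ᵐ z ∂μ, (μ.withDensity fun z => ENNReal.ofReal (r z)).rnDeriv (μ.withDensity m) z
        = (m z)⁻¹ * ENNReal.ofReal (r z)) →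
      (∀ z, m z = ENNReal.ofReal ((r z + s z) / 2)) →
      klDiv (μ.withDensity fun z => ENNReal.ofReal (r z)) (μ.withDensity m)
        = ∫ z, r z * Real.log (r z / (r z + s z)) ∂μ + Real.log 2 := by
    intro r s hr_meas hr0 hs0 hr_prob hint_r hint_rs hrs_pos hd hm_eq
    have hr_nn : Measurable fun z => (r z).toNNReal := hr_meas.real_toNNReal
    calc klDiv (μ.withDensity fun z => ENNReal.ofReal (r z)) (μ.withDensity m)
        = ∫ z, (r z).toNNReal • llr (μ.withDensity fun z => ENNReal.ofReal (r z))
            (μ.withDensity m) z ∂μ := by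
          rw [klDiv]
          exact integral_withDensity_eq_integral_smul hr_nn _
      _ = ∫ z, (r z * Real.log (r z / (r z + s z)) + r z * Real.log 2) ∂μ := by
          refine integral_congr_ae ?_
          filter_upwards [hd, hrs_pos] with z hz hpos
          simp only [llr, hz, hm_eq z]
          rcases eq_or_lt_of_le (hr0 z) with h0 | h0
          · simp [← h0]
          · have h2 : (0:ℝ) < (r z + s z) / 2 := by linarith
            rw [← ENNReal.ofReal_inv_of_pos h2, ← ENNReal.ofReal_mul (by positivity)]
            rw [ENNReal.toReal_ofReal (by positivity)]
            have : ((r z + s z) / 2)⁻¹ * r z = (r z / (r z + s z)) * 2 := by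
              field_simp
            rw [this, Real.log_mul (by positivity) two_ne_zero]
            simp only [NNReal.smul_def, smul_eq_mul, Real.coe_toNNReal _ (hr0 z)]
            ring
      _ = ∫ z, r z * Real.log (r z / (r z + s z)) ∂μ + Real.log 2 := by
          rw [integral_add hint_rs (hint_r.mul_const _), integral_mul_const, hr_prob, one_mul]
  have hposq : ∀ᵐ z ∂μ, 0 < q z + p z := by filter_upwards [h_pos] with z hz; linarith
  have h2R : ∀ x : ℝ, 0 ≤ x → (2:ℝ≥0∞)⁻¹ * ENNReal.ofReal x = ENNReal.ofReal (x/2) := by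
    intro x hx
    rw [div_eq_mul_inv, ENNReal.ofReal_mul hx, ENNReal.ofReal_inv_of_pos (by norm_num), mul_comm]
    norm_num
  have hkP := key p q hp_meas hp_nonneg hq_nonneg hp_prob hint_p h_int_pstar h_pos hPd
    (fun z => by
      rw [hm_def]; dsimp only [hf_def, hg_def]
      rw [← ENNReal.ofReal_add (hp_nonneg z) (hq_nonneg z),
        h2R _ (add_nonneg (hp_nonneg z) (hq_nonneg z))])
  have h_int_qstar' : Integrable (fun z => q z * Real.log (q z / (q z + p z))) μ := by
    have : (fun z => q z * Real.log (q z / (q z + p z)))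
        = fun z => q z * Real.log (q z / (p z + q z)) := by
      funext z; rw [add_comm (q z)]
    rw [this]; exact h_int_qstar
  have hkQ := key q p hq_meas hq_nonneg hp_nonneg hq_prob hint_q h_int_qstar' hposq hQd
    (fun z => by
      rw [hm_def]; dsimp only [hf_def, hg_def]
      rw [← ENNReal.ofReal_add (hp_nonneg z) (hq_nonneg z),
        h2R _ (add_nonneg (hp_nonneg z) (hq_nonneg z)), add_comm (q z)])
  rw [hM, hkP, hkQ]
  have h4 : Real.log 4 = Real.log 2 + Real.log 2 := by
    rw [← Real.log_mul two_ne_zero two_ne_zero]; norm_num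
  have : ∫ z, q z * Real.log (q z / (q z + p z)) ∂μ
      = ∫ z, q z * Real.log (q z / (p z + q z)) ∂μ := by
    congr 1; funext z; rw [add_comm (q z)]
  rw [this, h4]
  ring
end

section
/- The Deep Infomax estimator is a variational lower bound of the (Jensen–Shannon version of) divergence: for every bounded measurable function T : W → ℝ, E_P[ −softplus(−T) ] − E_Q[ softplus(T) ] ≤ KL(P ‖ M) + KL(Q ‖ M) − log 4, where M = ½(P + Q). (This justifies training the statistics network T to maximize the estimator Î in order to obtain a lower-bound estimate of the JS-version mutual information.) -/
open MeasureTheory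

/-- The softplus function `softplus t = log(1 + exp t)`. -/
noncomputable def softplus (t : ℝ) : ℝ := Real.log (1 + Real.exp t)

/-- Bound on `x log x` on `[0,2]`. -/
lemma xlogx_bound {x : ℝ} (h0 : 0 ≤ x) (h2 : x ≤ 2) : |x * Real.log x| ≤ 2 := by
  rcases le_or_gt x 1 with hx1 | hx1
  · rcases eq_or_lt_of_le h0 with h | h
    · simp [← h]
    · have := Real.abs_log_mul_self_lt x h hx1
      rw [mul_comm] at this
      linarith
  · have hlx : 0 ≤ Real.log x := Real.log_nonneg (by linarith)
    have hlx2 : Real.log x ≤ x - 1 := Real.log_le_sub_one_of_pos (by linarith)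
    rw [abs_of_nonneg (by positivity)]
    nlinarith

/-- The pointwise optimality of the discriminator. -/
lemma key_pointwise {a b s : ℝ} (ha : 0 ≤ a) (hb : 0 ≤ b) (hab : a + b = 2)
    (hs0 : 0 < s) (hs1 : s < 1) :
    a * Real.log s + b * Real.log (1 - s) ≤ a * Real.log (a / 2) + b * Real.log (b / 2) := by
  have h1 : a * Real.log s ≤ a * Real.log (a / 2) + (2 * s - a) := by
    rcases eq_or_lt_of_le ha with h | h
    · simp [← h]; positivity
    · have hd : 0 < s / (a / 2) := by positivity
      have hl : Real.log (s / (a / 2)) ≤ s / (a / 2) - 1 := Real.log_le_sub_one_of_pos hd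
      rw [Real.log_div (ne_of_gt hs0) (by positivity)] at hl
      have := mul_le_mul_of_nonneg_left hl (le_of_lt h)
      have ha2 : a * (s / (a / 2)) = 2 * s := by field_simp
      nlinarith
  have h2 : b * Real.log (1 - s) ≤ b * Real.log (b / 2) + (2 * (1 - s) - b) := by
    rcases eq_or_lt_of_le hb with h | h
    · simp [← h]; linarith
    · have hd : 0 < (1 - s) / (b / 2) := by
        apply div_pos (by linarith) (by linarith)
      have hl : Real.log ((1 - s) / (b / 2)) ≤ (1 - s) / (b / 2) - 1 :=
        Real.log_le_sub_one_of_pos hd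
      rw [Real.log_div (by linarith) (by positivity)] at hl
      have := mul_le_mul_of_nonneg_left hl (le_of_lt h)
      have hb2 : b * ((1 - s) / (b / 2)) = 2 * (1 - s) := by field_simp
      nlinarith
  linarith

/-- **The Deep Infomax estimator is a variational lower bound of the
Jensen–Shannon version of the divergence**: for every bounded measurable
`T : W → ℝ`,
`E_P[-softplus(-T)] - E_Q[softplus T] ≤ KL(P‖M) + KL(Q‖M) - log 4`,
where `M = ½(P+Q)`. -/
theorem deep_infomax_lower_bound
    {W : Type*} [MeasurableSpace W] (P Q : Measure W)
    [IsProbabilityMeasure P] [IsProbabilityMeasure Q]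
    (T : W → ℝ) (hT_meas : Measurable T) (hT_bdd : ∃ C : ℝ, ∀ x, |T x| ≤ C) :
    ∫ x, -softplus (-T x) ∂P - ∫ x, softplus (T x) ∂Q ≤
      klDiv P ((2 : ENNReal)⁻¹ • (P + Q)) +
        klDiv Q ((2 : ENNReal)⁻¹ • (P + Q)) - Real.log 4 := by
  obtain ⟨C, hC⟩ := hT_bdd
  set M : Measure W := (2 : ENNReal)⁻¹ • (P + Q) with hM
  -- Basic facts about `M`
  have hPQ2M : P + Q = (2 : ENNReal) • M := by
    rw [hM, smul_smul, ENNReal.mul_inv_cancel (by norm_num) (by norm_num), one_smul]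
  have hMP : IsProbabilityMeasure M := by
    constructor
    rw [hM]
    simp [Measure.smul_apply, Measure.add_apply, measure_univ, smul_eq_mul]
    exact ENNReal.inv_two_add_inv_two
  have hPM : P ≪ M := by
    refine Measure.AbsolutelyContinuous.mk fun S hS hS0 => ?_
    rw [hM] at hS0
    simp only [Measure.smul_apply, Measure.add_apply, smul_eq_mul] at hS0
    rcases mul_eq_zero.mp hS0 with h | h
    · simp at h
    · exact le_antisymm (le_trans (le_add_right le_rfl) h.le) zero_le
  have hQM : Q ≪ M := by
    refine Measure.AbsolutelyContinuous.mk fun S hS hS0 => ?_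
    rw [hM] at hS0
    simp only [Measure.smul_apply, Measure.add_apply, smul_eq_mul] at hS0
    rcases mul_eq_zero.mp hS0 with h | h
    · simp at h
    · exact le_antisymm (le_trans (le_add_left le_rfl) h.le) zero_le
  -- densities
  set p : W → ℝ := fun x => (P.rnDeriv M x).toReal with hp
  set q : W → ℝ := fun x => (Q.rnDeriv M x).toReal with hq
  have hp_meas : Measurable p := (Measure.measurable_rnDeriv P M).ennreal_toReal
  have hq_meas : Measurable q := (Measure.measurable_rnDeriv Q M).ennreal_toReal
  have hp_nonneg : ∀ x, 0 ≤ p x := fun x => ENNReal.toReal_nonneg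
  have hq_nonneg : ∀ x, 0 ≤ q x := fun x => ENNReal.toReal_nonneg
  -- the densities sum to 2 a.e.
  have hsumE : P.rnDeriv M + Q.rnDeriv M =ᵐ[M] fun _ => (2 : ENNReal) := by
    have h1 : (P + Q).rnDeriv M =ᵐ[M] P.rnDeriv M + Q.rnDeriv M :=
      Measure.rnDeriv_add' P Q M
    have h2 : ((2 : ENNReal) • M).rnDeriv M =ᵐ[M] (2 : ENNReal) • M.rnDeriv M :=
      Measure.rnDeriv_smul_left_of_ne_top' M M (by norm_num)
    have h3 := Measure.rnDeriv_self M
    rw [hPQ2M] at h1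
    filter_upwards [h1, h2, h3] with x hx1 hx2 hx3
    rw [← hx1, hx2, Pi.smul_apply, hx3, smul_eq_mul, mul_one]
  have hsum : ∀ᵐ x ∂M, p x + q x = 2 := by
    filter_upwards [hsumE] with x hx
    rw [Pi.add_apply] at hx
    have hPlt : P.rnDeriv M x ≠ ⊤ :=
      ne_top_of_le_ne_top ENNReal.ofNat_ne_top (le_self_add.trans hx.le)
    have hQlt : Q.rnDeriv M x ≠ ⊤ :=
      ne_top_of_le_ne_top ENNReal.ofNat_ne_top (le_add_self.trans hx.le)
    have : p x + q x = ((P.rnDeriv M x) + (Q.rnDeriv M x)).toReal :=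
      (ENNReal.toReal_add hPlt hQlt).symm
    rw [this, hx]
    norm_num
  -- the discriminator
  set σ : W → ℝ := fun x => (1 + Real.exp (-T x))⁻¹ with hσdef
  have hσ_meas : Measurable σ := (measurable_const.add hT_meas.neg.exp).inv
  have hσ_pos : ∀ x, 0 < σ x := fun x => inv_pos.2 (by positivity)
  have hσ_lt1 : ∀ x, σ x < 1 := by
    intro x
    have h1 : (1:ℝ) < 1 + Real.exp (-T x) := by nlinarith [Real.exp_pos (-T x)]
    calc σ x = (1 + Real.exp (-T x))⁻¹ := rfl
    _ < 1 := by
      rw [inv_lt_one_iff₀]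
      right
      exact h1
  have h1σ : ∀ x, 1 - σ x = (1 + Real.exp (T x))⁻¹ := by
    intro x
    have he : Real.exp (-T x) * Real.exp (T x) = 1 := by
      rw [← Real.exp_add]; simp
    have h0 : (1 : ℝ) + Real.exp (-T x) ≠ 0 := by positivity
    have h0' : (1 : ℝ) + Real.exp (T x) ≠ 0 := by positivity
    rw [hσdef]
    field_simp
    nlinarith [he]
  have hlogσ : ∀ x, Real.log (σ x) = -softplus (-T x) := by
    intro x
    rw [hσdef]
    simp only [Real.log_inv, softplus]
  have hlog1σ : ∀ x, Real.log (1 - σ x) = -softplus (T x) := by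
    intro x
    rw [h1σ, Real.log_inv, softplus]
  -- bounds on the log-discriminator
  set D : ℝ := Real.log (1 + Real.exp C) with hD
  have hsp_nonneg : ∀ t : ℝ, 0 ≤ softplus t := fun t =>
    Real.log_nonneg (by nlinarith [Real.exp_pos t])
  have hsp_le : ∀ t : ℝ, t ≤ C → softplus t ≤ D := by
    intro t ht
    rw [softplus, hD]
    have := Real.exp_le_exp.mpr ht
    apply Real.log_le_log (by positivity)
    linarith
  have hlogσ_bd : ∀ x, |Real.log (σ x)| ≤ D := by
    intro x
    rw [hlogσ, abs_neg, abs_of_nonneg (hsp_nonneg _)]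
    exact hsp_le _ (by linarith [abs_le.1 (hC x) |>.1])
  have hlog1σ_bd : ∀ x, |Real.log (1 - σ x)| ≤ D := by
    intro x
    rw [hlog1σ, abs_neg, abs_of_nonneg (hsp_nonneg _)]
    exact hsp_le _ (abs_le.1 (hC x) |>.2)
  -- a.e. bounds on densities
  have hple2 : ∀ᵐ x ∂M, p x ≤ 2 := by
    filter_upwards [hsum] with x hx
    linarith [hq_nonneg x]
  have hqle2 : ∀ᵐ x ∂M, q x ≤ 2 := by
    filter_upwards [hsum] with x hx
    linarith [hp_nonneg x]
  -- integrability of the four M-integrands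
  have hf1 : Integrable (fun x => p x * Real.log (σ x)) M := by
    refine Integrable.mono' (integrable_const (2 * D))
      ((hp_meas.mul (Real.measurable_log.comp hσ_meas)).aestronglyMeasurable) ?_
    filter_upwards [hple2] with x hx
    rw [Real.norm_eq_abs, abs_mul, abs_of_nonneg (hp_nonneg x)]
    have := hlogσ_bd x
    have hD0 : 0 ≤ D := le_trans (abs_nonneg _) this
    nlinarith [hp_nonneg x, abs_nonneg (Real.log (σ x))]
  have hf2 : Integrable (fun x => q x * Real.log (1 - σ x)) M := by
    refine Integrable.mono' (integrable_const (2 * D))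
      ((hq_meas.mul (Real.measurable_log.comp (measurable_const.sub hσ_meas))).aestronglyMeasurable) ?_
    filter_upwards [hqle2] with x hx
    rw [Real.norm_eq_abs, abs_mul, abs_of_nonneg (hq_nonneg x)]
    have := hlog1σ_bd x
    have hD0 : 0 ≤ D := le_trans (abs_nonneg _) this
    nlinarith [hq_nonneg x, abs_nonneg (Real.log (1 - σ x))]
  have half_log : ∀ a : ℝ, 0 ≤ a → a ≤ 2 → |a * Real.log (a / 2)| ≤ 4 := by
    intro a ha ha2
    have h : a * Real.log (a / 2) = 2 * ((a / 2) * Real.log (a / 2)) := by ring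
    rw [h, abs_mul, abs_of_nonneg (by norm_num : (0:ℝ) ≤ 2)]
    have := xlogx_bound (x := a / 2) (by linarith) (by linarith)
    linarith
  have hf3 : Integrable (fun x => p x * Real.log (p x / 2)) M := by
    refine Integrable.mono' (integrable_const (4:ℝ))
      ((hp_meas.mul (Real.measurable_log.comp (hp_meas.div_const 2))).aestronglyMeasurable) ?_
    filter_upwards [hple2] with x hx
    rw [Real.norm_eq_abs]
    exact half_log _ (hp_nonneg x) hx
  have hf4 : Integrable (fun x => q x * Real.log (q x / 2)) M := by
    refine Integrable.mono' (integrable_const (4:ℝ))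
      ((hq_meas.mul (Real.measurable_log.comp (hq_meas.div_const 2))).aestronglyMeasurable) ?_
    filter_upwards [hqle2] with x hx
    rw [Real.norm_eq_abs]
    exact half_log _ (hq_nonneg x) hx
  -- integrability of log densities w.r.t. P and Q
  have hI1 : Integrable (fun x => Real.log (p x)) P := by
    rw [← MeasureTheory.integrable_rnDeriv_smul_iff hPM]
    simp only [smul_eq_mul]
    refine Integrable.mono' (integrable_const (2:ℝ))
      ((hp_meas.mul (Real.measurable_log.comp hp_meas)).aestronglyMeasurable) ?_
    filter_upwards [hple2] with x hx
    rw [Real.norm_eq_abs]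
    exact xlogx_bound (hp_nonneg x) hx
  have hI2 : Integrable (fun x => Real.log (q x)) Q := by
    rw [← MeasureTheory.integrable_rnDeriv_smul_iff hQM]
    simp only [smul_eq_mul]
    refine Integrable.mono' (integrable_const (2:ℝ))
      ((hq_meas.mul (Real.measurable_log.comp hq_meas)).aestronglyMeasurable) ?_
    filter_upwards [hqle2] with x hx
    rw [Real.norm_eq_abs]
    exact xlogx_bound (hq_nonneg x) hx
  -- the core inequality, over M
  have hmono : ∫ x, p x * Real.log (σ x) ∂M + ∫ x, q x * Real.log (1 - σ x) ∂M ≤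
      ∫ x, p x * Real.log (p x / 2) ∂M + ∫ x, q x * Real.log (q x / 2) ∂M := by
    rw [← integral_add hf1 hf2, ← integral_add hf3 hf4]
    refine integral_mono_ae (hf1.add hf2) (hf3.add hf4) ?_
    filter_upwards [hsum] with x hx
    exact key_pointwise (hp_nonneg x) (hq_nonneg x) hx (hσ_pos x) (hσ_lt1 x)
  -- rewrite M-integrals as P- and Q-integrals
  have e1 : ∫ x, p x * Real.log (σ x) ∂M = ∫ x, Real.log (σ x) ∂P := by
    rw [← MeasureTheory.integral_rnDeriv_smul hPM (f := fun x => Real.log (σ x))]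
    simp only [smul_eq_mul]
    rfl
  have e2 : ∫ x, q x * Real.log (1 - σ x) ∂M = ∫ x, Real.log (1 - σ x) ∂Q := by
    rw [← MeasureTheory.integral_rnDeriv_smul hQM (f := fun x => Real.log (1 - σ x))]
    simp only [smul_eq_mul]
    rfl
  have e3 : ∫ x, p x * Real.log (p x / 2) ∂M = ∫ x, Real.log (p x / 2) ∂P := by
    rw [← MeasureTheory.integral_rnDeriv_smul hPM (f := fun x => Real.log (p x / 2))]
    simp only [smul_eq_mul]
    rfl
  have e4 : ∫ x, q x * Real.log (q x / 2) ∂M = ∫ x, Real.log (q x / 2) ∂Q := by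
    rw [← MeasureTheory.integral_rnDeriv_smul hQM (f := fun x => Real.log (q x / 2))]
    simp only [smul_eq_mul]
    rfl
  rw [e1, e2, e3, e4] at hmono
  -- density positivity
  have hppos : ∀ᵐ x ∂P, 0 < p x := by
    have h1 := Measure.rnDeriv_pos hPM
    have h2 := hPM.ae_le (Measure.rnDeriv_lt_top P M)
    filter_upwards [h1, h2] with x hx1 hx2
    exact ENNReal.toReal_pos hx1.ne' hx2.ne
  have hqpos : ∀ᵐ x ∂Q, 0 < q x := by
    have h1 := Measure.rnDeriv_pos hQM
    have h2 := hQM.ae_le (Measure.rnDeriv_lt_top Q M)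
    filter_upwards [h1, h2] with x hx1 hx2
    exact ENNReal.toReal_pos hx1.ne' hx2.ne
  -- relate to klDiv
  have eP : ∫ x, Real.log (p x / 2) ∂P = klDiv P M - Real.log 2 := by
    have hcong : ∀ᵐ x ∂P, Real.log (p x / 2) = Real.log (p x) - Real.log 2 := by
      filter_upwards [hppos] with x hx
      rw [Real.log_div hx.ne' two_ne_zero]
    rw [integral_congr_ae hcong, integral_sub hI1 (integrable_const _), integral_const,
      probReal_univ]
    simp [klDiv, llr]
    rfl
  have eQ : ∫ x, Real.log (q x / 2) ∂Q = klDiv Q M - Real.log 2 := by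
    have hcong : ∀ᵐ x ∂Q, Real.log (q x / 2) = Real.log (q x) - Real.log 2 := by
      filter_upwards [hqpos] with x hx
      rw [Real.log_div hx.ne' two_ne_zero]
    rw [integral_congr_ae hcong, integral_sub hI2 (integrable_const _), integral_const,
      probReal_univ]
    simp [klDiv, llr]
    rfl
  -- rewrite LHS
  have hLP : ∫ x, -softplus (-T x) ∂P = ∫ x, Real.log (σ x) ∂P :=
    integral_congr_ae (Filter.Eventually.of_forall fun x => (hlogσ x).symm)
  have hLQ : ∫ x, softplus (T x) ∂Q = -∫ x, Real.log (1 - σ x) ∂Q := by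
    rw [← integral_neg]
    refine integral_congr_ae (Filter.Eventually.of_forall fun x => ?_)
    simp only [hlog1σ x, neg_neg]
  have h4 : Real.log 4 = Real.log 2 + Real.log 2 := by
    rw [show (4:ℝ) = 2 * 2 by norm_num, Real.log_mul two_ne_zero two_ne_zero]
  rw [hLP, hLQ, h4]
  linarith [hmono, eP, eQ]
end

section
/- The Deep Infomax mutual-information estimator is a lower bound of the JS-version mutual information between the label and the latent code: for every bounded measurable T : Y×Z → ℝ, Î(z,y) := E_{(y,z)∼π}[ −softplus(−T(y,z)) ] − E_{(y,z)∼π_Y⊗π_Z}[ softplus(T(y,z)) ] ≤ KL(π ‖ M) + KL(π_Y⊗π_Z ‖ M) − log 4, where M = ½(π + π_Y⊗π_Z). In particular, if Y and Z are independent under π (i.e. π = π_Y⊗π_Z), then Î(z,y) ≤ 0 for every such T. -/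
open MeasureTheory

lemma softplus_nonneg (t : ℝ) : 0 ≤ softplus t :=
  Real.log_nonneg (by linarith [(Real.exp_pos t).le])

lemma softplus_mono {t C : ℝ} (h : t ≤ C) : softplus t ≤ softplus C := by
  unfold softplus
  have : Real.exp t ≤ Real.exp C := Real.exp_le_exp.2 h
  exact Real.log_le_log (by positivity) (by linarith)

lemma continuous_softplus : Continuous softplus := by
  apply Continuous.log (continuous_const.add Real.continuous_exp)
  intro x
  have := Real.exp_pos x
  exact (by positivity : (0:ℝ) < 1 + Real.exp x).ne'

/-- `x - y ≤ x log x - x log y` for `x ≥ 0`, `y > 0`. -/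
lemma mul_log_lower (x y : ℝ) (hx : 0 ≤ x) (hy : 0 < y) :
    x - y ≤ x * Real.log x - x * Real.log y := by
  rcases eq_or_lt_of_le hx with h | h
  · simp only [← h, zero_mul, zero_sub, sub_zero]
    linarith
  · have h1 : Real.log (y / x) ≤ y / x - 1 := Real.log_le_sub_one_of_pos (div_pos hy h)
    rw [Real.log_div hy.ne' h.ne'] at h1
    have h2 := mul_le_mul_of_nonneg_left h1 h.le
    have hx' : x * (y / x) = y := by field_simp
    nlinarith

lemma abs_mul_log_le (x : ℝ) (hx : 0 ≤ x) (hx2 : x ≤ 2) : |x * Real.log x| ≤ 2 := by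
  rw [abs_le]
  constructor
  · have := mul_log_lower x 1 hx one_pos
    simp only [Real.log_one, mul_zero, sub_zero] at this
    linarith
  · rcases eq_or_lt_of_le hx with h | h
    · simp [← h]
    · have hl : Real.log x ≤ Real.log 2 := Real.log_le_log h hx2
      have h2 : Real.log 2 ≤ 1 := by
        have := Real.log_le_sub_one_of_pos (by norm_num : (0:ℝ) < 2); linarith
      have h3 : (0:ℝ) ≤ Real.log 2 := Real.log_nonneg (by norm_num)
      nlinarith

/-- The key pointwise inequality. -/
lemma key_pointwise_s10 (t p q : ℝ) (hp : 0 ≤ p) (hq : 0 ≤ q) (hpq : p + q = 2) :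
    p * (-softplus (-t)) + q * (-softplus t) ≤
      p * Real.log p + q * Real.log q - Real.log 4 := by
  set s : ℝ := Real.exp t / (1 + Real.exp t) with hs
  have het : 0 < Real.exp t := Real.exp_pos t
  have hden : 0 < 1 + Real.exp t := by linarith
  have hs0 : 0 < s := div_pos het hden
  have hs1 : s < 1 := by rw [hs, div_lt_one hden]; linarith
  have h1 : -softplus (-t) = Real.log s := by
    rw [hs, Real.log_div het.ne' hden.ne', Real.log_exp]
    unfold softplus
    have he : (1 : ℝ) + Real.exp (-t) = (1 + Real.exp t) * Real.exp (-t) := by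
      rw [Real.exp_neg]; field_simp; ring
    rw [he, Real.log_mul hden.ne' (Real.exp_pos _).ne', Real.log_exp]
    ring
  have h2 : -softplus t = Real.log (1 - s) := by
    have he : (1:ℝ) - s = 1 / (1 + Real.exp t) := by
      rw [hs]; field_simp; ring
    rw [he, Real.log_div one_ne_zero hden.ne', Real.log_one]
    unfold softplus; ring
  rw [h1, h2]
  have hA := mul_log_lower p (2 * s) hp (by positivity)
  have hB := mul_log_lower q (2 * (1 - s)) hq (by nlinarith)
  have hlogA : Real.log (2 * s) = Real.log 2 + Real.log s :=
    Real.log_mul two_ne_zero hs0.ne'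
  have hlogB : Real.log (2 * (1 - s)) = Real.log 2 + Real.log (1 - s) :=
    Real.log_mul two_ne_zero (by linarith)
  have hlog4 : Real.log 4 = 2 * Real.log 2 := by
    rw [show (4:ℝ) = 2 ^ 2 by norm_num, Real.log_pow]; push_cast; ring
  rw [hlogA, mul_add] at hA
  rw [hlogB, mul_add] at hB
  have hc : p * Real.log 2 + q * Real.log 2 = Real.log 4 := by
    rw [hlog4]; linear_combination Real.log 2 * hpq
  linarith [hA, hB, hc]

/-- **The Deep Infomax mutual-information estimator is a lower bound of the
JS-version mutual information between label and latent code**: for every bounded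
measurable `T : Y×Z → ℝ`,
`Î(z,y) = E_π[-softplus(-T)] - E_{π_Y⊗π_Z}[softplus T]
  ≤ KL(π‖M) + KL(π_Y⊗π_Z‖M) - log 4`, with `M = ½(π + π_Y⊗π_Z)`.
In particular, if `Y` and `Z` are independent under `π` (i.e. `π = π_Y⊗π_Z`),
then `Î(z,y) ≤ 0` for every such `T`. -/
theorem deep_infomax_mi_lower_bound
    {Y Z : Type*} [MeasurableSpace Y] [MeasurableSpace Z]
    (π : Measure (Y × Z)) [IsProbabilityMeasure π]
    (T : Y × Z → ℝ) (hT_meas : Measurable T) (hT_bdd : ∃ C : ℝ, ∀ p, |T p| ≤ C) :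
    (∫ p, -softplus (-T p) ∂π -
        ∫ p, softplus (T p) ∂((π.map Prod.fst).prod (π.map Prod.snd)) ≤
      klDiv π
          ((2 : ENNReal)⁻¹ • (π + (π.map Prod.fst).prod (π.map Prod.snd))) +
        klDiv ((π.map Prod.fst).prod (π.map Prod.snd))
          ((2 : ENNReal)⁻¹ • (π + (π.map Prod.fst).prod (π.map Prod.snd))) -
        Real.log 4)
    ∧ (π = (π.map Prod.fst).prod (π.map Prod.snd) →
        ∫ p, -softplus (-T p) ∂π -
            ∫ p, softplus (T p) ∂((π.map Prod.fst).prod (π.map Prod.snd)) ≤ 0) := by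
  obtain ⟨C, hC⟩ := hT_bdd
  set ρ : Measure (Y × Z) := (π.map Prod.fst).prod (π.map Prod.snd) with hρ
  have h1 : IsProbabilityMeasure (π.map Prod.fst) :=
    Measure.isProbabilityMeasure_map measurable_fst.aemeasurable
  have h2 : IsProbabilityMeasure (π.map Prod.snd) :=
    Measure.isProbabilityMeasure_map measurable_snd.aemeasurable
  have hρprob : IsProbabilityMeasure ρ := by rw [hρ]; infer_instance
  set M : Measure (Y × Z) := (2 : ENNReal)⁻¹ • (π + ρ) with hM
  have hsum : π + ρ = (2 : ENNReal) • M := by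
    rw [hM, smul_smul, ENNReal.mul_inv_cancel two_ne_zero ENNReal.ofNat_ne_top, one_smul]
  have hMprob : IsProbabilityMeasure M := by
    constructor
    rw [hM]
    simp only [Measure.smul_apply, Measure.add_apply, measure_univ, smul_eq_mul]
    rw [show (1:ENNReal) + 1 = 2 by norm_num,
      ENNReal.inv_mul_cancel two_ne_zero ENNReal.ofNat_ne_top]
  have hπM : π ≪ M := by
    refine Measure.AbsolutelyContinuous.mk fun s hs h0 => ?_
    have hps : π s + ρ s = 0 := by
      have : (π + ρ) s = 0 := by rw [hsum, Measure.smul_apply, h0, smul_zero]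
      simpa [Measure.add_apply] using this
    exact (add_eq_zero.mp hps).1
  have hρM : ρ ≪ M := by
    refine Measure.AbsolutelyContinuous.mk fun s hs h0 => ?_
    have hps : π s + ρ s = 0 := by
      have : (π + ρ) s = 0 := by rw [hsum, Measure.smul_apply, h0, smul_zero]
      simpa [Measure.add_apply] using this
    exact (add_eq_zero.mp hps).2
  -- densities
  set pd : Y × Z → ℝ := fun x => (π.rnDeriv M x).toReal with hpd
  set qd : Y × Z → ℝ := fun x => (ρ.rnDeriv M x).toReal with hqd
  have hpd_meas : Measurable pd := (Measure.measurable_rnDeriv π M).ennreal_toReal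
  have hqd_meas : Measurable qd := (Measure.measurable_rnDeriv ρ M).ennreal_toReal
  have hadd : (π + ρ).rnDeriv M =ᵐ[M] π.rnDeriv M + ρ.rnDeriv M := Measure.rnDeriv_add π ρ M
  have hsmul : (π + ρ).rnDeriv M =ᵐ[M] (2 : ENNReal) • M.rnDeriv M := by
    rw [hsum]; exact Measure.rnDeriv_smul_left_of_ne_top M M ENNReal.ofNat_ne_top
  have hself : M.rnDeriv M =ᵐ[M] fun _ => 1 := Measure.rnDeriv_self M
  have hpq : ∀ᵐ x ∂M, pd x + qd x = 2 := by
    filter_upwards [hadd, hsmul, hself, Measure.rnDeriv_lt_top π M,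
      Measure.rnDeriv_lt_top ρ M] with x ha hsm hsf hfp hfq
    have h2' : π.rnDeriv M x + ρ.rnDeriv M x = 2 := by
      have hx := ha.symm.trans hsm
      simp only [Pi.add_apply, Pi.smul_apply, hsf, smul_eq_mul, mul_one] at hx
      exact hx
    rw [hpd, hqd]
    rw [← ENNReal.toReal_add hfp.ne hfq.ne, h2']
    norm_num
  have hpd_nonneg : ∀ x, 0 ≤ pd x := fun x => ENNReal.toReal_nonneg
  have hqd_nonneg : ∀ x, 0 ≤ qd x := fun x => ENNReal.toReal_nonneg
  have hpd_le : ∀ᵐ x ∂M, pd x ≤ 2 := by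
    filter_upwards [hpq] with x h; linarith [hqd_nonneg x]
  have hqd_le : ∀ᵐ x ∂M, qd x ≤ 2 := by
    filter_upwards [hpq] with x h; linarith [hpd_nonneg x]
  -- bounds on softplus terms
  have hsp_bound : ∀ t : ℝ, |t| ≤ C → |softplus t| ≤ softplus C := by
    intro t ht
    rw [abs_le]
    refine ⟨by linarith [softplus_nonneg t, softplus_nonneg C], ?_⟩
    exact softplus_mono (le_trans (le_abs_self t) ht)
  -- integral identities
  have hint1 : ∫ x, pd x * (-softplus (-T x)) ∂M = ∫ x, -softplus (-T x) ∂π := by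
    have := integral_rnDeriv_smul (μ := π) (ν := M) (f := fun x => -softplus (-T x)) hπM
    simpa [smul_eq_mul] using this
  have hint2 : ∫ x, qd x * softplus (T x) ∂M = ∫ x, softplus (T x) ∂ρ := by
    have := integral_rnDeriv_smul (μ := ρ) (ν := M) (f := fun x => softplus (T x)) hρM
    simpa [smul_eq_mul] using this
  have hint3 : klDiv π M = ∫ x, pd x * Real.log (pd x) ∂M := by
    have := integral_rnDeriv_smul (μ := π) (ν := M) (f := fun x => Real.log (pd x)) hπM
    unfold klDiv llr
    rw [← this]
    simp [smul_eq_mul, hpd]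
  have hint4 : klDiv ρ M = ∫ x, qd x * Real.log (qd x) ∂M := by
    have := integral_rnDeriv_smul (μ := ρ) (ν := M) (f := fun x => Real.log (qd x)) hρM
    unfold klDiv llr
    rw [← this]
    simp [smul_eq_mul, hqd]
  -- integrability
  have hsp1_meas : Measurable fun x => -softplus (-T x) :=
    ((continuous_softplus.measurable.comp hT_meas.neg)).neg
  have hsp2_meas : Measurable fun x => softplus (T x) :=
    continuous_softplus.measurable.comp hT_meas
  have Ia : Integrable (fun x => pd x * (-softplus (-T x))) M := by
    refine Integrable.mono' (integrable_const (2 * softplus C))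
      (hpd_meas.mul hsp1_meas).aestronglyMeasurable ?_
    filter_upwards [hpd_le] with x hx
    rw [norm_mul, Real.norm_eq_abs, Real.norm_eq_abs]
    have h1 : |(-softplus (-T x))| ≤ softplus C := by
      rw [abs_neg]; exact hsp_bound _ (by rw [abs_neg]; exact hC x)
    have h2 : |pd x| ≤ 2 := by rw [abs_of_nonneg (hpd_nonneg x)]; exact hx
    have := softplus_nonneg C
    nlinarith [abs_nonneg (-softplus (-T x)), abs_nonneg (pd x)]
  have Ib : Integrable (fun x => qd x * (-softplus (T x))) M := by
    refine Integrable.mono' (integrable_const (2 * softplus C))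
      (hqd_meas.mul hsp2_meas.neg).aestronglyMeasurable ?_
    filter_upwards [hqd_le] with x hx
    rw [norm_mul, Real.norm_eq_abs, Real.norm_eq_abs]
    have h1 : |(-softplus (T x))| ≤ softplus C := by
      rw [abs_neg]; exact hsp_bound _ (hC x)
    have h2 : |qd x| ≤ 2 := by rw [abs_of_nonneg (hqd_nonneg x)]; exact hx
    have := softplus_nonneg C
    nlinarith [abs_nonneg (-softplus (T x)), abs_nonneg (qd x)]
  have Ic : Integrable (fun x => pd x * Real.log (pd x)) M := by
    refine Integrable.mono' (integrable_const (2 : ℝ))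
      (hpd_meas.mul (Real.measurable_log.comp hpd_meas)).aestronglyMeasurable ?_
    filter_upwards [hpd_le] with x hx
    rw [Real.norm_eq_abs]
    exact abs_mul_log_le _ (hpd_nonneg x) hx
  have Id : Integrable (fun x => qd x * Real.log (qd x)) M := by
    refine Integrable.mono' (integrable_const (2 : ℝ))
      (hqd_meas.mul (Real.measurable_log.comp hqd_meas)).aestronglyMeasurable ?_
    filter_upwards [hqd_le] with x hx
    rw [Real.norm_eq_abs]
    exact abs_mul_log_le _ (hqd_nonneg x) hx
  -- the main inequality
  have hIab : Integrable (fun x => pd x * (-softplus (-T x)) + qd x * (-softplus (T x))) M :=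
    Ia.add Ib
  have hIcd : Integrable (fun x => pd x * Real.log (pd x) + qd x * Real.log (qd x)) M :=
    Ic.add Id
  have hIg : Integrable
      (fun x => pd x * Real.log (pd x) + qd x * Real.log (qd x) - Real.log 4) M :=
    hIcd.sub (integrable_const _)
  have hmain : ∫ x, -softplus (-T x) ∂π - ∫ x, softplus (T x) ∂ρ ≤
      klDiv π M + klDiv ρ M - Real.log 4 := by
    have hneg : ∫ x, qd x * (-softplus (T x)) ∂M = -∫ x, qd x * softplus (T x) ∂M := by
      rw [← integral_neg]; congr 1; funext x; ring
    have hconst : ∫ _ : Y × Z, Real.log 4 ∂M = Real.log 4 := by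
      simp [integral_const]
    have e1 : ∫ x, (pd x * (-softplus (-T x)) + qd x * (-softplus (T x))) ∂M
        = ∫ x, pd x * (-softplus (-T x)) ∂M + ∫ x, qd x * (-softplus (T x)) ∂M :=
      integral_add Ia Ib
    have e2 : ∫ x, (pd x * Real.log (pd x) + qd x * Real.log (qd x) - Real.log 4) ∂M
        = ∫ x, pd x * Real.log (pd x) ∂M + ∫ x, qd x * Real.log (qd x) ∂M - Real.log 4 := by
      rw [integral_sub hIcd (integrable_const _), integral_add Ic Id, hconst]
    have step : ∫ x, (pd x * (-softplus (-T x)) + qd x * (-softplus (T x))) ∂M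
        ≤ ∫ x, (pd x * Real.log (pd x) + qd x * Real.log (qd x) - Real.log 4) ∂M := by
      refine integral_mono_ae hIab hIg ?_
      filter_upwards [hpq] with x hx
      exact key_pointwise_s10 (T x) (pd x) (qd x) (hpd_nonneg x) (hqd_nonneg x) hx
    rw [hint3, hint4]
    linarith [step, e1, e2, hint1, hint2, hneg]
  refine ⟨hmain, fun h => ?_⟩
  have hMπ : M = π := by
    rw [hM, ← h, ← two_smul ENNReal π, smul_smul,
      ENNReal.inv_mul_cancel two_ne_zero ENNReal.ofNat_ne_top, one_smul]
  have hkl : klDiv π π = 0 := by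
    unfold klDiv
    have hz : llr π π =ᵐ[π] 0 := by
      filter_upwards [Measure.rnDeriv_self π] with x hx
      simp [llr, hx]
    exact integral_eq_zero_of_ae hz
  calc ∫ x, -softplus (-T x) ∂π - ∫ x, softplus (T x) ∂ρ
      ≤ klDiv π M + klDiv ρ M - Real.log 4 := hmain
    _ ≤ 0 := by
        rw [hMπ, ← h, hkl]
        simp only [add_zero, zero_sub, neg_nonpos, zero_add]
        exact Real.log_nonneg (by norm_num)
end
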